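/- Suppose the limiting value g(∞) = lim_{r→∞} g(r) exists and is positive and finite, and fix 0 < ε < 1/2 and R > 0. Then there exists M > 0 such that for all x ∈ ℝⁿ with |x| ≥ M and all y ∈ ℝⁿ with |y| < R, one has (1−2ε) g(∞) |x| < Γ(x+y) − Γ(y) < (1+2ε) g(∞) |x|. -/

import Mathlib

open MeasureTheory Filter Set Topology

/-- The energy kernel `Γ(x) = G(|x|)`, where `G(r) = ∫₀^r g(s) ds`. -/
noncomputable def Gam {n : ℕ} (g : ℝ → ℝ)
    (x : EuclideanSpace ℝ (Fin n)) : ℝ :=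
  ∫ s in (0:ℝ)..‖x‖, g s

set_option maxHeartbeats 1000000 in
theorem renormalized_kernel_two_sided_bound {n : ℕ} (hn : 1 ≤ n)
    (g : ℝ → ℝ) (hg_cont : ContinuousOn g (Ici 0)) (hg0 : g 0 = 0)
    (ginf : ℝ) (hginf_pos : 0 < ginf) (hg_lim : Tendsto g atTop (𝓝 ginf))
    (ε : ℝ) (hε0 : 0 < ε) (hε2 : ε < 1 / 2) (R : ℝ) (hR : 0 < R) :
    ∃ M : ℝ, 0 < M ∧ ∀ x y : EuclideanSpace ℝ (Fin n), M ≤ ‖x‖ → ‖y‖ < R →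
      (1 - 2 * ε) * ginf * ‖x‖ < Gam g (x + y) - Gam g y ∧
      Gam g (x + y) - Gam g y < (1 + 2 * ε) * ginf * ‖x‖ := by
  have hδ : 0 < ε * ginf := mul_pos hε0 hginf_pos
  obtain ⟨r0, hr0⟩ := (Metric.tendsto_atTop.mp hg_lim (ε * ginf) hδ)
  set r1 : ℝ := max (max r0 R) 0 with hr1def
  have hr1R : R ≤ r1 := le_max_of_le_left (le_max_right _ _)
  have hr1r0 : r0 ≤ r1 := le_max_of_le_left (le_max_left _ _)
  have hr10 : (0:ℝ) ≤ r1 := le_max_right _ _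
  have hgbd : ∀ s, r1 ≤ s → |g s - ginf| < ε * ginf := by
    intro s hs
    have := hr0 s (le_trans hr1r0 hs)
    rwa [Real.dist_eq] at this
  obtain ⟨C, hC⟩ := (isCompact_Icc (a := (0:ℝ)) (b := r1)).exists_bound_of_continuousOn
    (hg_cont.mono (fun z hz => hz.1))
  have hC0 : 0 ≤ C := le_trans (norm_nonneg _) (hC 0 ⟨le_refl _, hr10⟩)
  have hnum : 0 ≤ C * r1 + (1 + ε) * ginf * (R + r1) := by
    have h1 : 0 ≤ C * r1 := mul_nonneg hC0 hr10
    have h2 : 0 ≤ (1 + ε) * ginf * (R + r1) := by positivity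
    linarith
  set M : ℝ := (C * r1 + (1 + ε) * ginf * (R + r1)) / (ε * ginf) + r1 + R + 1 with hMdef
  have hq0 : 0 ≤ (C * r1 + (1 + ε) * ginf * (R + r1)) / (ε * ginf) := div_nonneg hnum hδ.le
  have hM0 : 0 < M := by rw [hMdef]; linarith
  have hkey : C * r1 + (1 + ε) * ginf * (R + r1) < ε * ginf * M := by
    have h2 : 0 < (ε * ginf) * (r1 + R + 1) := mul_pos hδ (by linarith)
    have h3 : ε * ginf * M
        = (C * r1 + (1 + ε) * ginf * (R + r1)) + (ε * ginf) * (r1 + R + 1) := by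
      rw [hMdef, mul_add, mul_add, mul_add, mul_div_cancel₀ _ hδ.ne']
      ring
    linarith
  refine ⟨M, hM0, fun x y hx hy => ?_⟩
  set a : ℝ := ‖y‖ with hadef
  set b : ℝ := ‖x + y‖ with hbdef
  have ha0 : 0 ≤ a := norm_nonneg _
  have hb0 : 0 ≤ b := norm_nonneg _
  have hbub : b ≤ ‖x‖ + a := norm_add_le x y
  have hblb : ‖x‖ - a ≤ b := by
    have h : ‖x‖ ≤ b + a := by
      calc ‖x‖ = ‖(x + y) + (-y)‖ := by rw [add_assoc, add_neg_cancel, add_zero]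
        _ ≤ ‖x + y‖ + ‖-y‖ := norm_add_le _ _
        _ = b + a := by rw [norm_neg]
    linarith
  have haR : a < R := hy
  have hMx : M ≤ ‖x‖ := hx
  have hbr1 : r1 ≤ b := by
    have : r1 + 1 ≤ M - R := by rw [hMdef]; linarith
    linarith
  have hint : ∀ u v : ℝ, 0 ≤ u → 0 ≤ v → IntervalIntegrable g volume u v := by
    intro u v hu hv
    apply ContinuousOn.intervalIntegrable
    apply hg_cont.mono
    rw [Set.uIcc]
    intro z hz
    exact le_trans (le_inf hu hv) hz.1
  have har1 : a ≤ r1 := le_trans haR.le hr1R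
  have hI : Gam g (x + y) - Gam g y = ∫ s in a..b, g s := by
    simp only [Gam, ← hadef, ← hbdef]
    exact intervalIntegral.integral_interval_sub_left (hint 0 b le_rfl hb0)
      (hint 0 a le_rfl ha0)
  have hsplit : (∫ s in a..b, g s) = (∫ s in a..r1, g s) + ∫ s in r1..b, g s :=
    (intervalIntegral.integral_add_adjacent_intervals (hint a r1 ha0 hr10)
      (hint r1 b hr10 hb0)).symm
  -- bound on the compact piece
  have hE1 : |∫ s in a..r1, g s| ≤ C * r1 := by
    have h := intervalIntegral.norm_integral_le_of_norm_le_const (a := a) (b := r1)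
      (C := C) (f := g) ?_
    · have habs : |r1 - a| = r1 - a := abs_of_nonneg (by linarith)
      have : ‖∫ s in a..r1, g s‖ ≤ C * (r1 - a) := by rwa [habs] at h
      have h2 : C * (r1 - a) ≤ C * r1 := by nlinarith
      calc |∫ s in a..r1, g s| = ‖∫ s in a..r1, g s‖ := (Real.norm_eq_abs _).symm
        _ ≤ C * (r1 - a) := this
        _ ≤ C * r1 := h2
    · intro z hz
      rw [Set.uIoc_of_le har1] at hz
      exact hC z ⟨le_trans ha0 hz.1.le, hz.2⟩
  have hE1l : -(C * r1) ≤ ∫ s in a..r1, g s := neg_le_of_abs_le hE1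
  have hE1u : (∫ s in a..r1, g s) ≤ C * r1 := le_of_abs_le hE1
  -- bounds on the tail piece
  have hE2l : (ginf - ε * ginf) * (b - r1) ≤ ∫ s in r1..b, g s := by
    have h := intervalIntegral.integral_mono_on (f := fun _ => ginf - ε * ginf) (g := g)
      hbr1 intervalIntegrable_const (hint r1 b hr10 hb0) ?_
    · rwa [intervalIntegral.integral_const, smul_eq_mul, mul_comm] at h
    · intro s hs
      have h' := abs_lt.mp (hgbd s hs.1)
      linarith [h'.1]
  have hE2u : (∫ s in r1..b, g s) ≤ (ginf + ε * ginf) * (b - r1) := by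
    have h := intervalIntegral.integral_mono_on (f := g) (g := fun _ => ginf + ε * ginf)
      hbr1 (hint r1 b hr10 hb0) intervalIntegrable_const ?_
    · rwa [intervalIntegral.integral_const, smul_eq_mul, mul_comm] at h
    · intro s hs
      have h' := abs_lt.mp (hgbd s hs.1)
      linarith [h'.2]
  have hxM : ε * ginf * M ≤ ε * ginf * ‖x‖ := mul_le_mul_of_nonneg_left hMx hδ.le
  have hQ : C * r1 + (1 + ε) * ginf * (R + r1) < ε * ginf * ‖x‖ := lt_of_lt_of_le hkey hxM
  -- tail interval length estimates
  have hεg : ε * ginf < ginf := by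
    have := mul_pos (show (0:ℝ) < 1 / 2 - ε by linarith) hginf_pos
    nlinarith
  have hlen1 : (ginf - ε * ginf) * (‖x‖ - R - r1) ≤ (ginf - ε * ginf) * (b - r1) := by
    apply mul_le_mul_of_nonneg_left _ (by linarith)
    linarith
  have hlen2 : (ginf + ε * ginf) * (b - r1) ≤ (ginf + ε * ginf) * (‖x‖ + R - r1) := by
    apply mul_le_mul_of_nonneg_left _ (by linarith)
    linarith
  have hp1 : 0 ≤ ε * ginf * (R + r1) := mul_nonneg hδ.le (by linarith)
  set E1 : ℝ := ∫ s in a..r1, g s with hE1def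
  set E2 : ℝ := ∫ s in r1..b, g s with hE2def
  clear_value E1 E2
  clear_value M a b
  clear_value r1
  clear hr1def hMdef hq0 hnum hgbd hint
  have hp2 : 0 ≤ (1 + ε) * ginf * r1 := by positivity
  have hp3 : 0 ≤ ginf * (R + r1) := mul_nonneg hginf_pos.le (by linarith)
  rw [hI, hsplit]
  set X : ℝ := ‖x‖ with hXdef
  clear_value X
  clear hI hsplit hadef hbdef hE1def hE2def hC hr0 hg_lim hg_cont hbub hblb hx hMx
    hxM hXdef x y
  constructor
  · nlinarith [hE1l, hE2l, hlen1, hQ, hp1, hp2, hp3]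
  · nlinarith [hE1u, hE2u, hlen2, hQ, hp1, hp2, hp3]
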